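/- Let x̄ be a strongly stable fractional matching with x̄ ≠ x^{μ_x̄}, where μ_x̄ assigns each firm its q_f best workers in the support of x̄. Set α = min{ x̄_{f,w} : x^{μ_x̄}_{f,w} = 1 }. Then 0 < α < 1, and y = (x̄ − α·x^{μ_x̄})/(1−α) is again a strongly stable fractional matching whose support is a proper subset of the support of x̄. -/

import Mathlib

open Finset
open scoped Classical

/-- A many-to-one matching market: firms `F`, workers `W`, quotas `q`,
strict preference relations of firms over individual workers and of workers
over firms, and acceptability predicates. -/
structure Market (F W : Type*) where
  q : F → ℕ
  qpos : ∀ f, 1 ≤ q f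
  prefF : F → W → W → Prop
  prefW : W → F → F → Prop
  accF : F → W → Prop
  accW : W → F → Prop
  prefF_trans : ∀ f, Transitive (prefF f)
  prefF_irrefl : ∀ f w, ¬ prefF f w w
  prefF_total : ∀ f j w, j ≠ w → prefF f j w ∨ prefF f w j
  prefW_trans : ∀ w, Transitive (prefW w)
  prefW_irrefl : ∀ w f, ¬ prefW w f f
  prefW_total : ∀ w i f, i ≠ f → prefW w i f ∨ prefW w f i

namespace Market

variable {F W : Type*} [Fintype F] [Fintype W] (M : Market F W)

def acceptable (f : F) (w : W) : Prop := M.accF f w ∧ M.accW w f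

def weakF (f : F) (j w : W) : Prop := M.prefF f j w ∨ j = w

def weakW (w : W) (i f : F) : Prop := M.prefW w i f ∨ i = f

noncomputable def rowSumAbove (x : F → W → ℝ) (f : F) (w : W) : ℝ :=
  ∑ j ∈ univ.filter (fun j => M.weakF f j w), x f j

noncomputable def rowSumStrict (x : F → W → ℝ) (f : F) (w : W) : ℝ :=
  ∑ j ∈ univ.filter (fun j => M.prefF f j w), x f j

noncomputable def colSumAbove (x : F → W → ℝ) (w : W) (f : F) : ℝ :=
  ∑ i ∈ univ.filter (fun i => M.weakW w i f), x i w

noncomputable def colSumStrict (x : F → W → ℝ) (w : W) (f : F) : ℝ :=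
  ∑ i ∈ univ.filter (fun i => M.prefW w i f), x i w

/-- The SCP linear system: nonnegativity, firm capacity, worker capacity,
zero on unacceptable pairs, and the stability inequality on acceptable pairs. -/
def SCP (x : F → W → ℝ) : Prop :=
  (∀ f w, 0 ≤ x f w) ∧
  (∀ f, ∑ j, x f j ≤ (M.q f : ℝ)) ∧
  (∀ w, ∑ i, x i w ≤ 1) ∧
  (∀ f w, ¬ M.acceptable f w → x f w = 0) ∧
  (∀ f w, M.acceptable f w →
    (M.q f : ℝ) ≤
      M.rowSumStrict x f w + (M.q f : ℝ) * M.colSumStrict x w f + (M.q f : ℝ) * x f w)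

/-- The strong stability condition at a pair `(f, w)`. -/
def StrongCondAt (x : F → W → ℝ) (f : F) (w : W) : Prop :=
  ((M.q f : ℝ) - M.rowSumAbove x f w) * (1 - M.colSumAbove x w f) = 0

/-- A strongly stable fractional matching. -/
def StronglyStable (x : F → W → ℝ) : Prop :=
  M.SCP x ∧ ∀ f w, M.acceptable f w → M.StrongCondAt x f w

def isMatching (μ : F → Finset W) : Prop :=
  (∀ f, (μ f).card ≤ M.q f) ∧ ∀ w f f', w ∈ μ f → w ∈ μ f' → f = f'

def indivRational (μ : F → Finset W) : Prop := ∀ f w, w ∈ μ f → M.acceptable f w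

def blocks (μ : F → Finset W) (f : F) (w : W) : Prop :=
  w ∉ μ f ∧ M.acceptable f w ∧ (∀ f', w ∈ μ f' → M.prefW w f f') ∧
    ((μ f).card < M.q f ∨ ∃ w' ∈ μ f, M.prefF f w w')

def isStable (μ : F → Finset W) : Prop :=
  M.isMatching μ ∧ M.indivRational μ ∧ ∀ f w, ¬ M.blocks μ f w

noncomputable def incidence (_m : Market F W) (μ : F → Finset W) : F → W → ℝ :=
  fun f w => if w ∈ μ f then 1 else 0

def firmWeakDom (x y : F → W → ℝ) (f : F) : Prop :=
  ∀ w, M.rowSumAbove y f w ≤ M.rowSumAbove x f w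

/-- All firms weakly prefer `x` to `y`, at least one strictly. -/
def firmsPrefer (x y : F → W → ℝ) : Prop :=
  (∀ f, M.firmWeakDom x y f) ∧ ∃ f w, M.rowSumAbove y f w < M.rowSumAbove x f w

end Market

namespace Market

variable {F W : Type*} [Fintype F] [Fintype W] (M : Market F W)

noncomputable def supportRow (_m : Market F W) (x : F → W → ℝ) (f : F) : Finset W :=
  univ.filter (fun w => 0 < x f w)

/-- `μ_x(f)`: the `q f` most preferred workers of `f` among those with `x f w > 0`. -/
noncomputable def muX (x : F → W → ℝ) (f : F) : Finset W :=
  (M.supportRow x f).filter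
    (fun w => ((M.supportRow x f).filter (fun w' => M.prefF f w' w)).card < M.q f)

end Market

section Aux

variable {F W : Type*} [Fintype F] [Fintype W] (M : Market F W) (x : F → W → ℝ)

lemma aux_mem_supportRow {f : F} {w : W} : w ∈ M.supportRow x f ↔ 0 < x f w := by
  simp [Market.supportRow]

lemma aux_muX_subset (f : F) : M.muX x f ⊆ M.supportRow x f := Finset.filter_subset _ _

lemma aux_pos_of_mem_muX {f : F} {w : W} (h : w ∈ M.muX x f) : 0 < x f w :=
  (aux_mem_supportRow M x).1 (aux_muX_subset M x f h)

lemma aux_filterWeakF (f : F) (w : W) :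
    univ.filter (fun j => M.weakF f j w) = insert w (univ.filter (fun j => M.prefF f j w)) := by
  ext j
  simp [Market.weakF, or_comm]

lemma aux_filterWeakW (w : W) (f : F) :
    univ.filter (fun i => M.weakW w i f) = insert f (univ.filter (fun i => M.prefW w i f)) := by
  ext i
  simp [Market.weakW, or_comm]

lemma aux_rowSumAbove_eq (f : F) (w : W) :
    M.rowSumAbove x f w = M.rowSumStrict x f w + x f w := by
  rw [Market.rowSumAbove, aux_filterWeakF, Finset.sum_insert (by simp [M.prefF_irrefl]),
    Market.rowSumStrict, add_comm]

lemma aux_colSumAbove_eq (w : W) (f : F) :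
    M.colSumAbove x w f = M.colSumStrict x w f + x f w := by
  rw [Market.colSumAbove, aux_filterWeakW, Finset.sum_insert (by simp [M.prefW_irrefl]),
    Market.colSumStrict, add_comm]

lemma aux_rank_card {α : Type*} (s : Finset α) (p : α → α → Prop)
    (htrans : Transitive p) (hirr : ∀ a, ¬ p a a) (htot : ∀ a b, a ≠ b → p a b ∨ p b a)
    (q : ℕ) (r : α → ℕ) (hrdef : ∀ w, r w = (s.filter (fun w' => p w' w)).card) :
    (s.filter (fun w => r w < q)).card = min q s.card := by
  classical
  have hinj : Set.InjOn r s := by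
    intro a ha b hb hab
    by_contra hne
    have key : ∀ u v, u ∈ s → v ∈ s → p u v → r u < r v := by
      intro u v hu hv huv
      have hsub : s.filter (fun w' => p w' u) ⊆ s.filter (fun w' => p w' v) := by
        intro z hz
        rw [Finset.mem_filter] at hz ⊢
        exact ⟨hz.1, htrans hz.2 huv⟩
      have hu' : u ∈ s.filter (fun w' => p w' v) := Finset.mem_filter.2 ⟨hu, huv⟩
      have hu'' : u ∉ s.filter (fun w' => p w' u) := by simp [hirr]
      rw [hrdef u, hrdef v]
      exact Finset.card_lt_card (Finset.ssubset_iff_of_subset hsub |>.2 ⟨u, hu', hu''⟩)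
    rcases htot a b (by simpa using hne) with h | h
    · exact absurd hab (Nat.ne_of_lt (key a b ha hb h))
    · exact absurd hab.symm (Nat.ne_of_lt (key b a hb ha h))
  have himage : s.image r = Finset.range s.card := by
    apply Finset.eq_of_subset_of_card_le
    · intro n hn
      rcases Finset.mem_image.1 hn with ⟨a, ha, rfl⟩
      have hsub2 : s.filter (fun w' => p w' a) ⊆ s.erase a := by
        intro z hz
        rw [Finset.mem_filter] at hz
        refine Finset.mem_erase.2 ⟨?_, hz.1⟩
        rintro rfl; exact hirr _ hz.2
      have hle := Finset.card_le_card hsub2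
      rw [Finset.card_erase_of_mem ha] at hle
      have hpos : 0 < s.card := Finset.card_pos.2 ⟨a, ha⟩
      have hra := hrdef a
      rw [Finset.mem_range]
      omega
    · rw [Finset.card_range, Finset.card_image_of_injOn hinj]
  have hfilt : (s.filter (fun w => r w < q)).image r = Finset.range (min s.card q) := by
    ext n
    constructor
    · intro hn
      rcases Finset.mem_image.1 hn with ⟨a, ha, rfl⟩
      rw [Finset.mem_filter] at ha
      have : r a ∈ s.image r := Finset.mem_image_of_mem r ha.1
      rw [himage, Finset.mem_range] at this
      rw [Finset.mem_range]
      exact lt_min this ha.2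
    · intro hn
      rw [Finset.mem_range, lt_min_iff] at hn
      have : n ∈ s.image r := by rw [himage, Finset.mem_range]; exact hn.1
      rcases Finset.mem_image.1 this with ⟨a, ha, rfl⟩
      exact Finset.mem_image_of_mem r (Finset.mem_filter.2 ⟨ha, hn.2⟩)
  have hinj2 : Set.InjOn r (s.filter (fun w => r w < q)) :=
    hinj.mono (by intro z hz; exact Finset.mem_coe.2 (Finset.mem_filter.1 (Finset.mem_coe.1 hz)).1)
  have hcards := Finset.card_image_of_injOn hinj2
  rw [hfilt, Finset.card_range] at hcards
  rw [← hcards, Nat.min_comm]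

lemma aux_card_muX (f : F) :
    (M.muX x f).card = min (M.q f) (M.supportRow x f).card := by
  rw [Market.muX]
  exact aux_rank_card (M.supportRow x f) (M.prefF f) (M.prefF_trans f) (M.prefF_irrefl f)
    (M.prefF_total f) (M.q f) _ (fun w => rfl)

end Aux
section Aux2

variable {F W : Type*} [Fintype F] [Fintype W] (M : Market F W) (x : F → W → ℝ)
  (hx : M.StronglyStable x)

include hx

lemma aux_x_nonneg (f : F) (w : W) : 0 ≤ x f w := hx.1.1 f w

lemma aux_x_le_one (f : F) (w : W) : x f w ≤ 1 := by
  have h1 : x f w ≤ ∑ i, x i w :=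
    Finset.single_le_sum (fun i _ => hx.1.1 i w) (Finset.mem_univ f)
  exact h1.trans (hx.1.2.2.1 w)

lemma aux_acceptable_of_pos {f : F} {w : W} (h : 0 < x f w) : M.acceptable f w := by
  by_contra hc
  rw [hx.1.2.2.2.1 f w hc] at h
  exact lt_irrefl 0 h

lemma aux_strong' {f : F} {w : W} (h : M.acceptable f w) :
    M.rowSumAbove x f w = (M.q f : ℝ) ∨ M.colSumAbove x w f = 1 := by
  have := hx.2 f w h
  rw [Market.StrongCondAt, mul_eq_zero] at this
  rcases this with h1 | h1
  · left; linarith [sub_eq_zero.1 h1]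
  · right; linarith [sub_eq_zero.1 h1]

lemma aux_colAbove_le_colsum (w : W) (f : F) : M.colSumAbove x w f ≤ ∑ i, x i w :=
  Finset.sum_le_sum_of_subset_of_nonneg (Finset.filter_subset _ _)
    (fun i _ _ => hx.1.1 i w)

lemma aux_xfw_le_colAbove (f : F) (w : W) : x f w ≤ M.colSumAbove x w f := by
  refine Finset.single_le_sum (f := fun i => x i w) (fun i _ => hx.1.1 i w) ?_
  exact Finset.mem_filter.2 ⟨Finset.mem_univ _, Or.inr rfl⟩

lemma aux_rowStrict_le {f : F} {w : W} :
    M.rowSumStrict x f w ≤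
      (((M.supportRow x f).filter (fun w' => M.prefF f w' w)).card : ℝ) := by
  have h1 : M.rowSumStrict x f w ≤
      ∑ j ∈ univ.filter (fun j => M.prefF f j w), (if 0 < x f j then (1:ℝ) else 0) := by
    apply Finset.sum_le_sum
    intro j _
    by_cases hj : 0 < x f j
    · simp [hj, aux_x_le_one M x hx f j]
    · simp [hj]
      linarith [hx.1.1 f j, hj]
  rw [Finset.sum_boole] at h1
  have h2 : (univ.filter (fun j => M.prefF f j w)).filter (fun j => 0 < x f j) =
      (M.supportRow x f).filter (fun w' => M.prefF f w' w) := by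
    rw [Market.supportRow, Finset.filter_comm]
  rw [h2] at h1
  exact h1

lemma aux_star {f : F} {w : W} (h : w ∈ M.muX x f) : M.colSumAbove x w f = 1 := by
  have hpos : 0 < x f w := aux_pos_of_mem_muX M x h
  have hacc : M.acceptable f w := aux_acceptable_of_pos M x hx hpos
  by_cases h1 : x f w = 1
  · have h2 := aux_xfw_le_colAbove M x hx f w
    have h3 := (aux_colAbove_le_colsum M x hx w f).trans (hx.1.2.2.1 w)
    linarith
  · have hlt : x f w < 1 := lt_of_le_of_ne (aux_x_le_one M x hx f w) h1
    have hcard : (((M.supportRow x f).filter (fun w' => M.prefF f w' w)).card : ℝ)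
        ≤ (M.q f : ℝ) - 1 := by
      rw [Market.muX, Finset.mem_filter] at h
      have h2' : ((((M.supportRow x f).filter (fun w' => M.prefF f w' w)).card : ℝ) + 1)
          ≤ (M.q f : ℝ) := by exact_mod_cast h.2
      linarith
    have hR : M.rowSumAbove x f w < (M.q f : ℝ) := by
      rw [aux_rowSumAbove_eq]
      have := aux_rowStrict_le M x hx (f := f) (w := w)
      linarith
    rcases aux_strong' M x hx hacc with h2 | h2
    · exact absurd h2 (ne_of_lt hR)
    · exact h2

lemma aux_colsum_one {f : F} {w : W} (h : w ∈ M.muX x f) : ∑ i, x i w = 1 := by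
  have h1 := aux_star M x hx h
  have h2 := aux_colAbove_le_colsum M x hx w f
  have h3 := hx.1.2.2.1 w
  linarith

lemma aux_zero_below {f i : F} {w : W} (h : w ∈ M.muX x f) (hnw : ¬ M.weakW w i f) :
    x i w = 0 := by
  have hsplit := Finset.sum_filter_add_sum_filter_not univ (fun i => M.weakW w i f)
    (fun i => x i w)
  have h1 : M.colSumAbove x w f = 1 := aux_star M x hx h
  have h2 : ∑ i, x i w = 1 := aux_colsum_one M x hx h
  have h3 : ∑ i ∈ univ.filter (fun i => ¬ M.weakW w i f), x i w = 0 := by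
    rw [Market.colSumAbove] at h1
    rw [← hsplit, h1] at h2
    linarith
  have := (Finset.sum_eq_zero_iff_of_nonneg (fun i _ => hx.1.1 i w)).1 h3
  exact this i (by simp [hnw])

lemma aux_matching {f f' : F} {w : W} (h : w ∈ M.muX x f) (h' : w ∈ M.muX x f') :
    f = f' := by
  by_contra hne
  have key : ∀ g g', w ∈ M.muX x g → w ∈ M.muX x g' → M.prefW w g g' → False := by
    intro g g' hg hg' hgg
    have : ¬ M.weakW w g' g := by
      rintro (h1 | rfl)
      · exact M.prefW_irrefl w g (M.prefW_trans w hgg h1)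
      · exact M.prefW_irrefl w _ hgg
    have hz := aux_zero_below M x hx hg this
    have := aux_pos_of_mem_muX M x hg'
    linarith
  rcases M.prefW_total w f f' hne with h1 | h1
  · exact key f f' h h' h1
  · exact key f' f h' h h1

end Aux2
section Aux3

variable {F W : Type*} [Fintype F] [Fintype W] (M : Market F W) (x : F → W → ℝ)
  (hx : M.StronglyStable x)

include hx

lemma aux_rowsum_le (f : F) : ∑ j, x f j ≤ ((M.muX x f).card : ℝ) := by
  rcases le_or_gt (M.supportRow x f).card (M.q f) with h | h
  · have hc : (M.muX x f).card = (M.supportRow x f).card := by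
      rw [aux_card_muX]; omega
    rw [hc]
    have h1 : ∑ j, x f j ≤ ∑ j, (if 0 < x f j then (1:ℝ) else 0) := by
      apply Finset.sum_le_sum
      intro j _
      by_cases hj : 0 < x f j
      · simp [hj, aux_x_le_one M x hx f j]
      · simp [hj]; linarith [hx.1.1 f j]
    rw [Finset.sum_boole] at h1
    exact h1
  · have hc : (M.muX x f).card = M.q f := by rw [aux_card_muX]; omega
    rw [hc]
    exact hx.1.2.1 f

lemma aux_counting :
    (∀ f, ∑ j, x f j = ((M.muX x f).card : ℝ)) ∧
    (∀ w, (∀ f, w ∉ M.muX x f) → ∀ i, x i w = 0) := by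
  classical
  set B : Finset W := univ.biUnion (M.muX x) with hB
  have hBcard : B.card = ∑ f, (M.muX x f).card := by
    rw [hB]
    apply Finset.card_biUnion
    intro f _ f' _ hne
    show Disjoint (M.muX x f) (M.muX x f')
    rw [Finset.disjoint_left]
    intro w hw hw'
    exact hne (aux_matching M x hx hw hw')
  have htot : ∑ f, ∑ j, x f j = ∑ w, ∑ i, x i w := Finset.sum_comm
  have hsplit : ∑ w ∈ univ.filter (fun w => w ∈ B), ∑ i, x i w
      + ∑ w ∈ univ.filter (fun w => w ∉ B), ∑ i, x i w = ∑ w, ∑ i, x i w :=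
    Finset.sum_filter_add_sum_filter_not univ _ _
  have hfB : univ.filter (fun w => w ∈ B) = B := by
    ext w; simp
  have hmatched : ∑ w ∈ univ.filter (fun w => w ∈ B), ∑ i, x i w = (B.card : ℝ) := by
    rw [hfB]
    rw [Finset.sum_congr rfl (fun w hw => ?_), Finset.sum_const, nsmul_eq_mul, mul_one]
    rcases Finset.mem_biUnion.1 (hB ▸ hw) with ⟨f, _, hf⟩
    exact aux_colsum_one M x hx hf
  have hU0 : 0 ≤ ∑ w ∈ univ.filter (fun w => w ∉ B), ∑ i, x i w :=
    Finset.sum_nonneg (fun w _ => Finset.sum_nonneg (fun i _ => hx.1.1 i w))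
  have hle : ∑ f, ∑ j, x f j ≤ ((∑ f, (M.muX x f).card : ℕ) : ℝ) := by
    push_cast
    exact Finset.sum_le_sum (fun f _ => aux_rowsum_le M x hx f)
  rw [← hBcard] at hle
  have hU : ∑ w ∈ univ.filter (fun w => w ∉ B), ∑ i, x i w = 0 := by
    have := htot ▸ hle
    rw [← hsplit, hmatched] at this
    linarith
  constructor
  · intro f
    have hge : (B.card : ℝ) ≤ ∑ f, ∑ j, x f j := by
      rw [htot, ← hsplit, hmatched]
      linarith
    have hsum0 : ∑ f, (((M.muX x f).card : ℝ) - ∑ j, x f j) = 0 := by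
      rw [Finset.sum_sub_distrib]
      have : ((B.card : ℕ) : ℝ) = ∑ f, ((M.muX x f).card : ℝ) := by
        rw [hBcard]; push_cast; rfl
      rw [← this]
      linarith
    have heach := (Finset.sum_eq_zero_iff_of_nonneg
      (fun f _ => sub_nonneg.2 (aux_rowsum_le M x hx f))).1 hsum0 f (Finset.mem_univ f)
    linarith [sub_eq_zero.1 heach]
  · intro w hw i
    have hwB : w ∉ B := by
      rw [hB]
      simp only [Finset.mem_biUnion, Finset.mem_univ, true_and, not_exists]
      exact hw
    have hcol0 : ∑ i, x i w = 0 := by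
      have := (Finset.sum_eq_zero_iff_of_nonneg
        (fun w' (_ : w' ∈ univ.filter (fun w => w ∉ B)) =>
          Finset.sum_nonneg (fun i _ => hx.1.1 i w'))).1 hU w (by simp [hwB])
      exact this
    exact (Finset.sum_eq_zero_iff_of_nonneg (fun i _ => hx.1.1 i w)).1 hcol0 i
      (Finset.mem_univ i)

end Aux3
theorem peel_off_muX {F W : Type*} [Fintype F] [Fintype W]
    (M : Market F W) (x : F → W → ℝ) (hx : M.StronglyStable x)
    (hne : x ≠ M.incidence (M.muX x))
    (α : ℝ) (hα : IsLeast {r : ℝ | ∃ f w, w ∈ M.muX x f ∧ x f w = r} α) :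
    0 < α ∧ α < 1 ∧
    M.StronglyStable (fun f w => (x f w - α * M.incidence (M.muX x) f w) / (1 - α)) ∧
    {p : F × W | 0 < (x p.1 p.2 - α * M.incidence (M.muX x) p.1 p.2) / (1 - α)} ⊂
      {p : F × W | 0 < x p.1 p.2} := by
  classical
  obtain ⟨⟨f0, w0, hw0, hxw0⟩, hlb⟩ := hα
  have hlb' : ∀ f w, w ∈ M.muX x f → α ≤ x f w := fun f w h => hlb ⟨f, w, h, rfl⟩
  have hαpos : 0 < α := hxw0 ▸ aux_pos_of_mem_muX M x hw0
  set χ : F → W → ℝ := M.incidence (M.muX x) with hχ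
  have hχval : ∀ f w, χ f w = if w ∈ M.muX x f then 1 else 0 := fun f w => rfl
  have hχ0 : ∀ f w, w ∉ M.muX x f → χ f w = 0 := by
    intro f w h; rw [hχval]; simp [h]
  have hχ1 : ∀ f w, w ∈ M.muX x f → χ f w = 1 := by
    intro f w h; rw [hχval]; simp [h]
  have hχnonneg : ∀ f w, 0 ≤ χ f w := by
    intro f w; rw [hχval]; split <;> norm_num
  -- α < 1
  have hα1 : α < 1 := by
    rcases lt_or_ge α 1 with h | h
    · exact h
    · exfalso
      apply hne
      funext f w
      by_cases hw : w ∈ M.muX x f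
      · have h1 := hlb' f w hw
        have h2 := aux_x_le_one M x hx f w
        have : x f w = 1 := le_antisymm h2 (by linarith)
        rw [this, hχ1 f w hw]
      · rw [hχ0 f w hw]
        by_contra hxfw
        have hxfwpos : 0 < x f w :=
          lt_of_le_of_ne (hx.1.1 f w) (Ne.symm hxfw)
        have hmatched : ¬ ∀ f', w ∉ M.muX x f' := by
          intro hall
          exact hxfw ((aux_counting M x hx).2 w hall f)
        push_neg at hmatched
        obtain ⟨i, hi⟩ := hmatched
        have hine : i ≠ f := by rintro rfl; exact hw hi
        have hxi1 : x i w = 1 := le_antisymm (aux_x_le_one M x hx i w)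
          (le_trans h (hlb' i w hi))
        have hsum : ∑ i' ∈ ({i, f} : Finset F), x i' w ≤ ∑ i', x i' w :=
          Finset.sum_le_sum_of_subset_of_nonneg (Finset.subset_univ _)
            (fun i' _ _ => hx.1.1 i' w)
        rw [Finset.sum_pair hine] at hsum
        have := hx.1.2.2.1 w
        linarith
  have h1α : 0 < 1 - α := by linarith
  set y : F → W → ℝ := fun f w => (x f w - α * χ f w) / (1 - α) with hy
  have hyval : ∀ f w, y f w = (x f w - α * χ f w) / (1 - α) := fun f w => rfl
  have hynonneg : ∀ f w, 0 ≤ y f w := by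
    intro f w
    rw [hyval]
    apply div_nonneg _ h1α.le
    by_cases hw : w ∈ M.muX x f
    · rw [hχ1 f w hw]; linarith [hlb' f w hw]
    · rw [hχ0 f w hw]; linarith [hx.1.1 f w]
  have hsumrow : ∀ (s : Finset W) (f : F),
      ∑ j ∈ s, y f j = (∑ j ∈ s, x f j - α * ∑ j ∈ s, χ f j) / (1 - α) := by
    intro s f
    rw [Finset.mul_sum, ← Finset.sum_sub_distrib, ← Finset.sum_div]
  have hsumcol : ∀ (s : Finset F) (w : W),
      ∑ i ∈ s, y i w = (∑ i ∈ s, x i w - α * ∑ i ∈ s, χ i w) / (1 - α) := by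
    intro s w
    rw [Finset.mul_sum, ← Finset.sum_sub_distrib, ← Finset.sum_div]
  have hχrow : ∀ (s : Finset W) (f : F),
      ∑ j ∈ s, χ f j = ((s.filter (fun j => j ∈ M.muX x f)).card : ℝ) := by
    intro s f
    rw [Finset.sum_congr rfl (fun j _ => hχval f j), Finset.sum_boole]
  have hχcol : ∀ (s : Finset F) (w : W),
      ∑ i ∈ s, χ i w = ((s.filter (fun i => w ∈ M.muX x i)).card : ℝ) := by
    intro s w
    rw [Finset.sum_congr rfl (fun i _ => hχval i w), Finset.sum_boole]
  have hfiltuniv : ∀ f : F, univ.filter (fun j => j ∈ M.muX x f) = M.muX x f := by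
    intro f; ext j; simp
  have hχrowtot : ∀ f : F, ∑ j, χ f j = ((M.muX x f).card : ℝ) := by
    intro f; rw [hχrow, hfiltuniv]
  have hxrowtot : ∀ f : F, ∑ j, x f j = ((M.muX x f).card : ℝ) := (aux_counting M x hx).1
  have hyrowtot : ∀ f : F, ∑ j, y f j = ((M.muX x f).card : ℝ) := by
    intro f
    rw [hsumrow, hχrowtot, hxrowtot]
    field_simp
  -- column totals
  have hycoltot : ∀ w : W, ∑ i, y i w ≤ 1 := by
    intro w
    by_cases hm : ∃ i, w ∈ M.muX x i
    · obtain ⟨i0, hi0⟩ := hm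
      have hxcol : ∑ i, x i w = 1 := aux_colsum_one M x hx hi0
      have hχcol1 : ∑ i, χ i w = 1 := by
        rw [hχcol]
        have : univ.filter (fun i => w ∈ M.muX x i) = {i0} := by
          ext i
          simp only [Finset.mem_filter, Finset.mem_univ, true_and, Finset.mem_singleton]
          constructor
          · intro h; exact aux_matching M x hx h hi0
          · rintro rfl; exact hi0
        rw [this, Finset.card_singleton]
        norm_num
      rw [hsumcol, hxcol, hχcol1]
      rw [div_le_one h1α]
      linarith
    · push_neg at hm
      have : ∀ i, y i w = 0 := by
        intro i
        rw [hyval, (aux_counting M x hx).2 w hm i, hχ0 i w (hm i)]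
        ring
      rw [Finset.sum_congr rfl (fun i _ => this i)]
      simp
  -- strong condition for y
  have hstrongy : ∀ f w, M.acceptable f w → M.StrongCondAt y f w := by
    intro f w hacc
    have hRy : M.rowSumAbove y f w =
        (M.rowSumAbove x f w - α * M.rowSumAbove χ f w) / (1 - α) := hsumrow _ f
    have hCy : M.colSumAbove y w f =
        (M.colSumAbove x w f - α * M.colSumAbove χ w f) / (1 - α) := hsumcol _ w
    rcases aux_strong' M x hx hacc with hR | hC
    · -- rowSumAbove x f w = q f ; show rowSumAbove χ f w = q f
      have hRle : M.rowSumAbove x f w ≤ ∑ j, x f j :=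
        Finset.sum_le_sum_of_subset_of_nonneg (Finset.subset_univ _)
          (fun j _ _ => hx.1.1 f j)
      have hcardle : ((M.muX x f).card : ℝ) ≤ (M.q f : ℝ) := by
        have := aux_card_muX M x f
        exact_mod_cast this ▸ (min_le_left _ _ : min (M.q f) _ ≤ M.q f)
      have hcardeq : ((M.muX x f).card : ℝ) = (M.q f : ℝ) := by
        rw [hxrowtot] at hRle
        rw [hR] at hRle
        linarith
      -- entries outside weak-above set are zero
      have hrest : ∑ j ∈ univ.filter (fun j => ¬ M.weakF f j w), x f j = 0 := by
        have hsplit := Finset.sum_filter_add_sum_filter_not univ (fun j => M.weakF f j w)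
          (fun j => x f j)
        have : M.rowSumAbove x f w
            + ∑ j ∈ univ.filter (fun j => ¬ M.weakF f j w), x f j = ∑ j, x f j := hsplit
        rw [hR, hxrowtot, hcardeq] at this
        linarith
      have hsubmu : M.muX x f ⊆ univ.filter (fun j => M.weakF f j w) := by
        intro j hj
        simp only [Finset.mem_filter, Finset.mem_univ, true_and]
        by_contra hnw
        have := (Finset.sum_eq_zero_iff_of_nonneg
          (fun j' _ => hx.1.1 f j')).1 hrest j (by simp [hnw])
        have := aux_pos_of_mem_muX M x hj
        linarith
      have hRχ : M.rowSumAbove χ f w = (M.q f : ℝ) := by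
        rw [Market.rowSumAbove, hχrow]
        have : (univ.filter (fun j => M.weakF f j w)).filter (fun j => j ∈ M.muX x f)
            = M.muX x f := by
          ext j
          simp only [Finset.mem_filter, Finset.mem_univ, true_and]
          constructor
          · exact fun h => h.2
          · intro h
            have := hsubmu h
            simp only [Finset.mem_filter, Finset.mem_univ, true_and] at this
            exact ⟨this, h⟩
        rw [this, hcardeq]
      rw [Market.StrongCondAt, hRy, hR, hRχ]
      have : ((M.q f : ℝ) - ((M.q f : ℝ) - α * (M.q f : ℝ)) / (1 - α)) = 0 := by
        field_simp
        ring
      rw [this, zero_mul]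
    · -- colSumAbove x w f = 1 ; find the firm w is matched to
      have hcolle : M.colSumAbove x w f ≤ ∑ i, x i w := aux_colAbove_le_colsum M x hx w f
      have hcol1 : ∑ i, x i w = 1 := le_antisymm (hx.1.2.2.1 w) (by linarith)
      have hm : ∃ i, w ∈ M.muX x i := by
        by_contra hall
        push_neg at hall
        have : ∑ i, x i w = 0 :=
          Finset.sum_eq_zero (fun i _ => (aux_counting M x hx).2 w hall i)
        linarith
      obtain ⟨i0, hi0⟩ := hm
      -- entries strictly below f are zero, so i0 is weakly above f
      have hrest : ∑ i ∈ univ.filter (fun i => ¬ M.weakW w i f), x i w = 0 := by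
        have hsplit := Finset.sum_filter_add_sum_filter_not univ (fun i => M.weakW w i f)
          (fun i => x i w)
        have : M.colSumAbove x w f
            + ∑ i ∈ univ.filter (fun i => ¬ M.weakW w i f), x i w = ∑ i, x i w := hsplit
        rw [hC, hcol1] at this
        linarith
      have hi0w : M.weakW w i0 f := by
        by_contra hnw
        have := (Finset.sum_eq_zero_iff_of_nonneg
          (fun i _ => hx.1.1 i w)).1 hrest i0 (by simp [hnw])
        have := aux_pos_of_mem_muX M x hi0
        linarith
      have hCχ : M.colSumAbove χ w f = 1 := by
        rw [Market.colSumAbove, hχcol]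
        have : (univ.filter (fun i => M.weakW w i f)).filter (fun i => w ∈ M.muX x i)
            = {i0} := by
          ext i
          simp only [Finset.mem_filter, Finset.mem_univ, true_and, Finset.mem_singleton]
          constructor
          · intro h; exact aux_matching M x hx h.2 hi0
          · rintro rfl; exact ⟨hi0w, hi0⟩
        rw [this, Finset.card_singleton]
        norm_num
      rw [Market.StrongCondAt, hCy, hC, hCχ]
      have : (1 - (1 - α * 1) / (1 - α)) = 0 := by
        field_simp
        ring
      rw [this, mul_zero]
  -- assemble StronglyStable y
  have hySS : M.StronglyStable y := by
    refine ⟨⟨hynonneg, ?_, hycoltot, ?_, ?_⟩, hstrongy⟩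
    · intro f
      rw [hyrowtot]
      have := aux_card_muX M x f
      exact_mod_cast this ▸ (min_le_left _ _ : min (M.q f) _ ≤ M.q f)
    · intro f w hnacc
      have hx0 : x f w = 0 := hx.1.2.2.2.1 f w hnacc
      have hχ0' : χ f w = 0 := by
        apply hχ0
        intro hmem
        exact hnacc (aux_acceptable_of_pos M x hx (aux_pos_of_mem_muX M x hmem))
      rw [hyval, hx0, hχ0']
      ring
    · intro f w hacc
      have hsc := hstrongy f w hacc
      rw [Market.StrongCondAt, mul_eq_zero] at hsc
      have hq1 : (1 : ℝ) ≤ (M.q f : ℝ) := by exact_mod_cast M.qpos f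
      have hSnonneg : 0 ≤ M.rowSumStrict y f w :=
        Finset.sum_nonneg (fun j _ => hynonneg f j)
      have hCnonneg : 0 ≤ M.colSumStrict y w f :=
        Finset.sum_nonneg (fun i _ => hynonneg i w)
      have hRdec := aux_rowSumAbove_eq M y f w
      have hCdec := aux_colSumAbove_eq M y w f
      have hyfw := hynonneg f w
      rcases hsc with h | h
      · have hR : M.rowSumAbove y f w = (M.q f : ℝ) := by linarith [sub_eq_zero.1 h]
        nlinarith [mul_nonneg (le_trans zero_le_one hq1) hCnonneg,
          mul_nonneg (by linarith : (0:ℝ) ≤ (M.q f : ℝ) - 1) hyfw]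
      · have hCeq : M.colSumAbove y w f = 1 := by linarith [sub_eq_zero.1 h]
        nlinarith
  refine ⟨hαpos, hα1, hySS, ?_⟩
  -- strict subset of supports
  have hsub : {p : F × W | 0 < (x p.1 p.2 - α * χ p.1 p.2) / (1 - α)} ⊆
      {p : F × W | 0 < x p.1 p.2} := by
    intro p hp
    simp only [Set.mem_setOf_eq] at hp ⊢
    have hnum : 0 < x p.1 p.2 - α * χ p.1 p.2 := by
      have := mul_pos hp h1α
      rwa [div_mul_cancel₀ _ (ne_of_gt h1α)] at this
    have := mul_nonneg hαpos.le (hχnonneg p.1 p.2)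
    linarith
  refine HasSubset.Subset.ssubset_of_ne hsub ?_
  intro heq
  have hmem : (f0, w0) ∈ {p : F × W | 0 < x p.1 p.2} := by
    simp only [Set.mem_setOf_eq]
    rw [hxw0]
    exact hαpos
  rw [← heq] at hmem
  simp only [Set.mem_setOf_eq] at hmem
  rw [hxw0, hχ1 f0 w0 hw0, mul_one, sub_self, zero_div] at hmem
  exact lt_irrefl 0 hmem
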